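/- arXiv:1907.01523 — 5 statements merged into one kernel-verified Lean document; each statement's English description precedes it below -/
import Mathlib

section
/- Let a, W, r > 0 and A, B ≥ 0. Define R : ℝ → ℝ by R(P) = ∫_{g ∈ (0,∞)} e^{-g} · W · log(1 + a·g·P) dg, and for x ∈ [0, 1] define P_req(x) = sInf { p : ℝ | p ≥ 0 ∧ R(p) ≥ x·r }. Assume that for every x ∈ [0, 1] there exists p ≥ 0 with R(p) ≥ x·r. Then the function η(x) = A·(1 - x)^3 + B·P_req(x) is convex on the interval [0, 1]. -/
open MeasureTheory Real Set

lemma integrable_phi (a W P : ℝ) (ha : 0 < a) (hP : 0 ≤ P) :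
    IntegrableOn (fun g : ℝ => Real.exp (-g) * W * Real.log (1 + a * g * P)) (Ioi 0) := by
  have hmeas : Measurable (fun g : ℝ => Real.exp (-g) * W * Real.log (1 + a * g * P)) := by
    apply Measurable.mul
    · exact (Real.measurable_exp.comp measurable_neg).mul measurable_const
    · exact Real.measurable_log.comp (measurable_const.add ((measurable_id.const_mul a).mul measurable_const))
  have hGamma := Real.GammaIntegral_convergent (by norm_num : (0:ℝ) < 2)
  have hGamma' : IntegrableOn (fun x : ℝ => Real.exp (-x) * x) (Ioi 0) := by
    have : ((2:ℝ) - 1) = 1 := by norm_num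
    simpa [this, Real.rpow_one] using hGamma
  refine Integrable.mono' ((hGamma'.const_mul (|W| * a * P))) hmeas.aestronglyMeasurable ?_
  rw [ae_restrict_iff' measurableSet_Ioi]
  filter_upwards with g hg
  have hg0 : 0 < g := hg
  have hpos : (0:ℝ) < 1 + a * g * P := by positivity
  have hlog0 : 0 ≤ Real.log (1 + a * g * P) := Real.log_nonneg (by nlinarith [mul_nonneg (mul_nonneg ha.le hg0.le) hP])
  have hlogle : Real.log (1 + a * g * P) ≤ a * g * P := by
    have := Real.log_le_sub_one_of_pos hpos
    linarith
  rw [Real.norm_eq_abs, abs_mul, abs_mul, abs_of_nonneg hlog0,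
      abs_of_nonneg (Real.exp_pos _).le]
  calc Real.exp (-g) * |W| * Real.log (1 + a * g * P)
      ≤ Real.exp (-g) * |W| * (a * g * P) := by
        apply mul_le_mul_of_nonneg_left hlogle (by positivity)
    _ = |W| * a * P * (Real.exp (-g) * g) := by ring

lemma R_concave (a W : ℝ) (ha : 0 < a) (hW : 0 < W)
    (p q s t : ℝ) (hp : 0 ≤ p) (hq : 0 ≤ q) (hs : 0 ≤ s) (ht : 0 ≤ t) (hst : s + t = 1) :
    s * (∫ g in Ioi (0:ℝ), Real.exp (-g) * W * Real.log (1 + a * g * p))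
      + t * (∫ g in Ioi (0:ℝ), Real.exp (-g) * W * Real.log (1 + a * g * q))
    ≤ ∫ g in Ioi (0:ℝ), Real.exp (-g) * W * Real.log (1 + a * g * (s * p + t * q)) := by
  have hip := integrable_phi a W p ha hp
  have hiq := integrable_phi a W q ha hq
  have hiz := integrable_phi a W (s * p + t * q) ha (by positivity)
  rw [← MeasureTheory.integral_const_mul, ← MeasureTheory.integral_const_mul, ← integral_add (hip.const_mul s) (hiq.const_mul t)]
  apply setIntegral_mono_on ((hip.const_mul s).add (hiq.const_mul t)) hiz measurableSet_Ioi
  intro g hg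
  simp only [Pi.add_apply]
  have hg0 : 0 < g := hg
  have hxp : (1 + a * g * p) ∈ Ioi (0:ℝ) := by simp only [mem_Ioi]; positivity
  have hxq : (1 + a * g * q) ∈ Ioi (0:ℝ) := by simp only [mem_Ioi]; positivity
  have hlog := strictConcaveOn_log_Ioi.concaveOn.2 hxp hxq hs ht hst
  simp only [smul_eq_mul] at hlog
  have heq : s * (1 + a * g * p) + t * (1 + a * g * q) = 1 + a * g * (s * p + t * q) := by
    linear_combination hst
  rw [heq] at hlog
  have hWe : 0 ≤ Real.exp (-g) * W := by positivity
  calc s * (Real.exp (-g) * W * Real.log (1 + a * g * p))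
        + t * (Real.exp (-g) * W * Real.log (1 + a * g * q))
      = Real.exp (-g) * W * (s * Real.log (1 + a * g * p) + t * Real.log (1 + a * g * q)) := by ring
    _ ≤ Real.exp (-g) * W * Real.log (1 + a * g * (s * p + t * q)) :=
        mul_le_mul_of_nonneg_left hlog hWe

theorem normalized_energy_convex (a W r A B : ℝ)
    (ha : 0 < a) (hW : 0 < W) (hr : 0 < r) (hA : 0 ≤ A) (hB : 0 ≤ B)
    (R : ℝ → ℝ)
    (hR : ∀ P : ℝ, R P = ∫ g in Set.Ioi (0:ℝ), Real.exp (-g) * W * Real.log (1 + a * g * P))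
    (P_req : ℝ → ℝ)
    (hP_req : ∀ x : ℝ, P_req x = sInf {p : ℝ | 0 ≤ p ∧ x * r ≤ R p})
    (hfeas : ∀ x ∈ Set.Icc (0:ℝ) 1, ∃ p : ℝ, 0 ≤ p ∧ x * r ≤ R p) :
    ConvexOn ℝ (Set.Icc (0:ℝ) 1)
      (fun x : ℝ => A * (1 - x) ^ 3 + B * P_req x) := by
  -- R concavity on nonneg arguments
  have hRcon : ∀ p q s t : ℝ, 0 ≤ p → 0 ≤ q → 0 ≤ s → 0 ≤ t → s + t = 1 →
      s * R p + t * R q ≤ R (s * p + t * q) := by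
    intro p q s t hp hq hs ht hst
    rw [hR, hR, hR]
    exact R_concave a W ha hW p q s t hp hq hs ht hst
  set S : ℝ → Set ℝ := fun x => {p : ℝ | 0 ≤ p ∧ x * r ≤ R p} with hS
  have hbdd : ∀ x : ℝ, BddBelow (S x) := fun x => ⟨0, fun p hp => hp.1⟩
  have hne : ∀ x ∈ Set.Icc (0:ℝ) 1, (S x).Nonempty := by
    intro x hx; obtain ⟨p, hp⟩ := hfeas x hx; exact ⟨p, hp⟩
  -- Convexity of P_req on Icc 0 1
  have hPconv : ConvexOn ℝ (Set.Icc (0:ℝ) 1) P_req := by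
    refine ⟨convex_Icc 0 1, ?_⟩
    intro x hx y hy s t hs ht hst
    simp only [smul_eq_mul]
    set z := s * x + t * y with hz
    have hzmem : z ∈ Set.Icc (0:ℝ) 1 :=
      (convex_Icc 0 1) hx hy hs ht hst
    have key : ∀ p ∈ S x, ∀ q ∈ S y, P_req z ≤ s * p + t * q := by
      intro p hp q hq
      rw [hP_req]
      apply csInf_le (hbdd z)
      constructor
      · have := hp.1; have := hq.1; positivity
      · have h1 : z * r = s * (x * r) + t * (y * r) := by ring
        have h2 : s * (x * r) + t * (y * r) ≤ s * R p + t * R q := by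
          have := hp.2; have := hq.2
          have h3 : s * (x * r) ≤ s * R p := mul_le_mul_of_nonneg_left hp.2 hs
          have h4 : t * (y * r) ≤ t * R q := mul_le_mul_of_nonneg_left hq.2 ht
          linarith
        have h5 := hRcon p q s t hp.1 hq.1 hs ht hst
        linarith [h1 ▸ le_trans h2 h5]
    have hPx : P_req x = sInf (S x) := hP_req x
    have hPy : P_req y = sInf (S y) := hP_req y
    rcases eq_or_lt_of_le hs with hs0 | hs0
    · -- s = 0, t = 1
      have ht1 : t = 1 := by linarith
      obtain ⟨q, hq⟩ := hne y hy
      have hzy : z = y := by rw [hz, ← hs0, ht1]; ring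
      rw [hzy, ← hs0, ht1]
      simp
    rcases eq_or_lt_of_le ht with ht0 | ht0
    · have hs1 : s = 1 := by linarith
      have hzx : z = x := by rw [hz, ← ht0, hs1]; ring
      rw [hzx, ← ht0, hs1]
      simp
    -- s, t > 0
    have step1 : ∀ p ∈ S x, P_req z ≤ s * p + t * sInf (S y) := by
      intro p hp
      have : (P_req z - s * p) / t ≤ sInf (S y) := by
        apply le_csInf (hne y hy)
        intro q hq
        rw [div_le_iff₀ ht0]
        have := key p hp q hq
        nlinarith
      rw [div_le_iff₀ ht0] at this
      nlinarith
    have step2 : (P_req z - t * sInf (S y)) / s ≤ sInf (S x) := by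
      apply le_csInf (hne x hx)
      intro p hp
      rw [div_le_iff₀ hs0]
      have := step1 p hp
      nlinarith
    rw [div_le_iff₀ hs0] at step2
    rw [hPx, hPy]
    nlinarith
  -- convexity of x ↦ (1-x)^3 on Icc 0 1
  have hcube : ConvexOn ℝ (Set.Icc (0:ℝ) 1) (fun x : ℝ => (1 - x) ^ 3) := by
    have hpow : ConvexOn ℝ (Set.Ici (0:ℝ)) (fun y : ℝ => y ^ 3) := convexOn_pow 3
    have haff : ConvexOn ℝ ((AffineMap.const ℝ ℝ (1:ℝ) - AffineMap.id ℝ ℝ) ⁻¹' Set.Ici 0)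
        ((fun y : ℝ => y ^ 3) ∘ (AffineMap.const ℝ ℝ (1:ℝ) - AffineMap.id ℝ ℝ)) :=
      hpow.comp_affineMap _
    have hsub : Set.Icc (0:ℝ) 1 ⊆ (AffineMap.const ℝ ℝ (1:ℝ) - AffineMap.id ℝ ℝ) ⁻¹' Set.Ici 0 := by
      intro x hx
      simp only [Set.mem_preimage, AffineMap.coe_sub, AffineMap.coe_const, AffineMap.coe_id,
        Pi.sub_apply, Function.const_apply, id_eq, Set.mem_Ici, sub_nonneg]
      exact hx.2
    have hres := haff.subset hsub (convex_Icc 0 1)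
    have hfun : ∀ x : ℝ, ((fun y : ℝ => y ^ 3) ∘ (AffineMap.const ℝ ℝ (1:ℝ) - AffineMap.id ℝ ℝ)) x
        = (1 - x) ^ 3 := by
      intro x
      simp [AffineMap.coe_sub, AffineMap.coe_const, AffineMap.coe_id]
    exact hres.congr (fun x _ => hfun x)
  have h1 : ConvexOn ℝ (Set.Icc (0:ℝ) 1) (fun x : ℝ => A * (1 - x) ^ 3) := by
    have := hcube.smul hA
    simpa [smul_eq_mul] using this
  have h2 : ConvexOn ℝ (Set.Icc (0:ℝ) 1) (fun x : ℝ => B * P_req x) := by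
    have := hPconv.smul hB
    simpa [smul_eq_mul] using this
  exact h1.add h2
end

section
/- Let a > 0 and P > 0. The function N ↦ ∫_{g ∈ (0,∞)} e^{-g} · N · log(1 + a·g·P/N) dg (Lebesgue integral over the interval (0,∞)) is strictly monotonically increasing on (0, ∞). -/
open MeasureTheory Real

lemma aux_strictMonoOn (t : ℝ) (ht : 0 < t) :
    StrictMonoOn (fun x : ℝ => x * (Real.log (x + t) - Real.log x)) (Set.Ioi 0) := by
  apply strictMonoOn_of_deriv_pos (convex_Ioi 0)
  · apply ContinuousOn.mul continuousOn_id
    apply ContinuousOn.sub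
    · apply ContinuousOn.log (by fun_prop)
      intro x hx; have : (0:ℝ) < x := hx; positivity
    · exact Real.continuousOn_log.mono (fun x hx => ne_of_gt hx)
  · intro x hx
    rw [interior_Ioi] at hx
    have hx' : (0:ℝ) < x := hx
    have hxt : (0:ℝ) < x + t := by linarith
    have h1 : HasDerivAt (fun x : ℝ => Real.log (x + t)) (1 / (x + t)) x := by
      simpa using (((hasDerivAt_id x).add_const t).log (ne_of_gt hxt))
    have h2 : HasDerivAt Real.log (1 / x) x := by
      simpa [one_div] using Real.hasDerivAt_log (ne_of_gt hx')
    have h : HasDerivAt (fun x : ℝ => x * (Real.log (x + t) - Real.log x))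
        (1 * (Real.log (x + t) - Real.log x) + x * (1 / (x + t) - 1 / x)) x :=
      (hasDerivAt_id x).mul (h1.sub h2)
    rw [h.deriv]
    -- need: 0 < log(x+t) - log x + (x/(x+t) - 1)
    have hu : Real.log (x / (x + t)) < x / (x + t) - 1 := by
      apply Real.log_lt_sub_one_of_pos (by positivity)
      intro hcontra
      have : x = x + t := by
        field_simp at hcontra; linarith
      linarith
    rw [Real.log_div (ne_of_gt hx') (ne_of_gt hxt)] at hu
    have hexp : x * (1 / (x + t) - 1 / x) = x / (x + t) - 1 := by
      field_simp
    rw [hexp]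
    linarith

lemma aux_rewrite (t N : ℝ) (ht : 0 < t) (hN : 0 < N) :
    N * Real.log (1 + t / N) = N * (Real.log (N + t) - Real.log N) := by
  rw [← Real.log_div (by positivity) (ne_of_gt hN)]
  congr 2
  field_simp

lemma aux_integrable (a P N : ℝ) (ha : 0 < a) (hP : 0 < P) (hN : 0 < N) :
    IntegrableOn (fun g : ℝ => Real.exp (-g) * N * Real.log (1 + a * g * P / N))
      (Set.Ioi 0) := by
  have hbase : IntegrableOn (fun x : ℝ => Real.exp (-x) * x ^ ((2:ℝ) - 1)) (Set.Ioi 0) :=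
    Real.GammaIntegral_convergent (by norm_num)
  have hbase' : IntegrableOn (fun x : ℝ => a * P * (Real.exp (-x) * x)) (Set.Ioi 0) := by
    apply Integrable.const_mul
    apply hbase.congr_fun ?_ measurableSet_Ioi
    intro x hx
    show Real.exp (-x) * x ^ ((2:ℝ) - 1) = Real.exp (-x) * x
    rw [show (2:ℝ) - 1 = 1 by norm_num, Real.rpow_one]
  apply Integrable.mono' hbase'
  · apply ContinuousOn.aestronglyMeasurable ?_ measurableSet_Ioi
    apply ContinuousOn.mul (by fun_prop)
    apply ContinuousOn.log (by fun_prop)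
    intro x hx
    have hx' : (0:ℝ) < x := hx
    positivity
  · rw [ae_restrict_iff' measurableSet_Ioi]
    filter_upwards with g hg
    have hg' : (0:ℝ) < g := hg
    have harg : (0:ℝ) < a * g * P / N := by positivity
    have hlog0 : 0 ≤ Real.log (1 + a * g * P / N) :=
      Real.log_nonneg (by linarith)
    have hlogle : Real.log (1 + a * g * P / N) ≤ a * g * P / N := by
      have := Real.log_le_sub_one_of_pos (show (0:ℝ) < 1 + a * g * P / N by linarith)
      linarith
    rw [Real.norm_eq_abs, abs_of_nonneg (by positivity)]
    have hexp : (0:ℝ) < Real.exp (-g) := Real.exp_pos _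
    calc Real.exp (-g) * N * Real.log (1 + a * g * P / N)
        ≤ Real.exp (-g) * N * (a * g * P / N) := by
          apply mul_le_mul_of_nonneg_left hlogle (by positivity)
      _ = a * P * (Real.exp (-g) * g) := by field_simp
  
theorem ergodic_capacity_strictMono_in_bandwidth (a P : ℝ) (ha : 0 < a) (hP : 0 < P) :
    StrictMonoOn
      (fun N : ℝ => ∫ g in Set.Ioi (0:ℝ), Real.exp (-g) * N * Real.log (1 + a * g * P / N))
      (Set.Ioi (0:ℝ)) := by
  intro M hM N hN hMN
  have hM' : (0:ℝ) < M := hM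
  have hN' : (0:ℝ) < N := hN
  have hIM := aux_integrable a P M ha hP hM'
  have hIN := aux_integrable a P N ha hP hN'
  simp only
  rw [← sub_pos, ← integral_sub hIN hIM]
  set F : ℝ → ℝ := fun g => Real.exp (-g) * N * Real.log (1 + a * g * P / N) -
      Real.exp (-g) * M * Real.log (1 + a * g * P / M) with hF
  have hFpos : ∀ g ∈ Set.Ioi (0:ℝ), 0 < F g := by
    intro g hg
    have hg' : (0:ℝ) < g := hg
    have ht : (0:ℝ) < a * g * P := by positivity
    have key : M * Real.log (1 + a * g * P / M) < N * Real.log (1 + a * g * P / N) := by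
      rw [aux_rewrite _ _ ht hM', aux_rewrite _ _ ht hN']
      exact aux_strictMonoOn (a * g * P) ht hM' hN' hMN
    have hexp : (0:ℝ) < Real.exp (-g) := Real.exp_pos _
    have : Real.exp (-g) * (M * Real.log (1 + a * g * P / M)) <
        Real.exp (-g) * (N * Real.log (1 + a * g * P / N)) :=
      (mul_lt_mul_iff_right₀ hexp).2 key
    simp only [hF]; nlinarith
  rw [setIntegral_pos_iff_support_of_nonneg_ae]
  · apply lt_of_lt_of_le ?_ (measure_mono (show Set.Ioi (0:ℝ) ⊆ Function.support F ∩ Set.Ioi 0 from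
      fun g hg => ⟨ne_of_gt (hFpos g hg), hg⟩))
    simp [Real.volume_Ioi]
  · filter_upwards [ae_restrict_mem measurableSet_Ioi] with g hg
    exact le_of_lt (hFpos g hg)
  · exact hIN.sub hIM
end

section
/- Let a > 0 and r > 0. Suppose 0 < N₁ < N₂ and P₁, P₂ > 0 satisfy N₁ · log(1 + a·P₁/N₁) = r and N₂ · log(1 + a·P₂/N₂) = r. Then P₂ < P₁. -/
theorem required_power_decreases_with_bandwidth (a r N₁ N₂ P₁ P₂ : ℝ)
    (ha : 0 < a) (hr : 0 < r)
    (hN₁ : 0 < N₁) (hN : N₁ < N₂) (hP₁ : 0 < P₁) (hP₂ : 0 < P₂)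
    (h1 : N₁ * Real.log (1 + a * P₁ / N₁) = r)
    (h2 : N₂ * Real.log (1 + a * P₂ / N₂) = r) :
    P₂ < P₁ := by
  have hN₂ : 0 < N₂ := hN₁.trans hN
  -- derive a*P_i = N_i*(exp(r/N_i)-1)
  have key : ∀ N P : ℝ, 0 < N → 0 < P → N * Real.log (1 + a * P / N) = r →
      a * P = N * (Real.exp (r / N) - 1) := by
    intro N P hNpos hPpos h
    have hy : 0 < 1 + a * P / N := by positivity
    have hlog : Real.log (1 + a * P / N) = r / N := by
      field_simp at h ⊢; linarith [h]
    have := Real.exp_log hy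
    rw [hlog] at this
    have : 1 + a * P / N = Real.exp (r / N) := this.symm
    field_simp at this ⊢
    linarith
  have k1 := key N₁ P₁ hN₁ hP₁ h1
  have k2 := key N₂ P₂ hN₂ hP₂ h2
  set x₁ := r / N₁ with hx1
  set x₂ := r / N₂ with hx2
  have hx2pos : 0 < x₂ := by positivity
  have hx21 : x₂ < x₁ := by
    exact div_lt_div_of_pos_left hr hN₁ hN
  -- (exp x₂ - 1)/x₂ < (exp x₁ - 1)/x₁ via secant monotonicity of exp
  have hsec := (strictConvexOn_exp).secant_strict_mono (a := 0) (x := x₂) (y := x₁)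
      (Set.mem_univ _) (Set.mem_univ _) (Set.mem_univ _) (ne_of_gt hx2pos)
      (ne_of_gt (hx2pos.trans hx21)) hx21
  simp only [Real.exp_zero, sub_zero] at hsec
  -- a*P₂ = N₂*(exp x₂ -1) = r * (exp x₂ -1)/x₂
  have e1 : a * P₁ = r * ((Real.exp x₁ - 1) / x₁) := by
    rw [k1, hx1]; field_simp
  have e2 : a * P₂ = r * ((Real.exp x₂ - 1) / x₂) := by
    rw [k2, hx2]; field_simp
  have : a * P₂ < a * P₁ := by
    rw [e1, e2]
    exact mul_lt_mul_of_pos_left hsec hr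
  exact lt_of_mul_lt_mul_left this ha.le
end

section
/- Let b, E, ρ, T > 0, and set g̃ = (1/2) · (ρT/E + √((ρT/E)² + 4ρT/E)). Define η : ℝ → ℝ by η(g) = ((1 - e^{-g})·E + e^{-g}·ρ·T/g)/b. Then η is strictly decreasing on the interval (0, g̃] and strictly increasing on the interval [g̃, ∞). -/
set_option maxHeartbeats 1000000


theorem urllc_energy_unimodal (b E ρ T : ℝ)
    (hb : 0 < b) (hE : 0 < E) (hρ : 0 < ρ) (hT : 0 < T) :
    StrictAntiOn (fun g : ℝ => ((1 - Real.exp (-g)) * E + Real.exp (-g) * ρ * T / g) / b)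
      (Set.Ioc (0:ℝ) ((1/2) * (ρ * T / E + Real.sqrt ((ρ * T / E) ^ 2 + 4 * ρ * T / E)))) ∧
    StrictMonoOn (fun g : ℝ => ((1 - Real.exp (-g)) * E + Real.exp (-g) * ρ * T / g) / b)
      (Set.Ici ((1/2) * (ρ * T / E + Real.sqrt ((ρ * T / E) ^ 2 + 4 * ρ * T / E)))) := by
  set c : ℝ := ρ * T / E with hc
  have hc0 : 0 < c := by positivity
  set s : ℝ := Real.sqrt ((ρ * T / E) ^ 2 + 4 * ρ * T / E) with hs
  have hE' : E ≠ 0 := hE.ne'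
  have hs2 : s ^ 2 = c ^ 2 + 4 * c := by
    rw [hs, sq, Real.mul_self_sqrt (by positivity), hc]
    field_simp
  have hs0 : 0 ≤ s := Real.sqrt_nonneg _
  have hsc : c < s := by nlinarith
  set G : ℝ := (1/2) * (ρ * T / E + s) with hG
  have hGc : c < G := by rw [hG, ← hc]; nlinarith
  have hG0 : 0 < G := lt_trans hc0 hGc
  -- G is root: E*G^2 = ρ*T*(G+1)
  have hroot : E * G ^ 2 = ρ * T * (G + 1) := by
    have h1 : G ^ 2 - c * G - c = 0 := by rw [hG, ← hc]; nlinarith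
    have h2 : ρ * T = c * E := by rw [hc]; field_simp
    nlinarith
  have hEG : ρ * T < E * G := by
    have h2 : ρ * T = c * E := by rw [hc]; field_simp
    nlinarith
  set f : ℝ → ℝ := fun g : ℝ => ((1 - Real.exp (-g)) * E + Real.exp (-g) * ρ * T / g) / b with hf
  set f' : ℝ → ℝ := fun g : ℝ =>
    Real.exp (-g) * (E - ρ * T * (g + 1) / g ^ 2) / b with hf'
  have hderiv : ∀ g : ℝ, g ≠ 0 → HasDerivAt f (f' g) g := by
    intro g hg
    have he : HasDerivAt (fun g : ℝ => Real.exp (-g)) (Real.exp (-g) * (-1)) g :=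
      (hasDerivAt_neg g).exp
    have h1 : HasDerivAt (fun g : ℝ => (1 - Real.exp (-g)) * E)
        ((0 - Real.exp (-g) * (-1)) * E) g :=
      ((hasDerivAt_const g (1:ℝ)).sub he).mul_const E
    have h2 : HasDerivAt (fun g : ℝ => Real.exp (-g) * ρ * T / g)
        (((Real.exp (-g) * (-1)) * ρ * T * g - Real.exp (-g) * ρ * T * 1) / g ^ 2) g :=
      ((he.mul_const ρ).mul_const T).div (hasDerivAt_id g) hg
    have h3 := ((h1.add h2).div_const b)
    convert h3 using 1
    · rfl
    · rfl
    · rfl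
    rw [hf']
    field_simp
    ring
  have hsign : ∀ g : ℝ, 0 < g →
      E * g ^ 2 - ρ * T * (g + 1) = (g - G) * (E * (g + G) - ρ * T) := by
    intro g _
    nlinarith [hroot]
  have hcont : ∀ g : ℝ, g ≠ 0 → ContinuousAt f g := fun g hg => (hderiv g hg).continuousAt
  clear_value c s G f f'
  constructor
  · apply strictAntiOn_of_deriv_neg (convex_Ioc 0 G)
    · exact fun g hg => (hcont g (ne_of_gt hg.1)).continuousWithinAt
    · intro g hg
      rw [interior_Ioc] at hg
      obtain ⟨hg0, hgG⟩ := hg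
      rw [(hderiv g (ne_of_gt hg0)).deriv, hf']
      apply div_neg_of_neg_of_pos _ hb
      apply mul_neg_of_pos_of_neg (Real.exp_pos _)
      rw [sub_neg, lt_div_iff₀ (by positivity)]
      have hp : 0 < E * (g + G) - ρ * T := by nlinarith [mul_pos hE hg0]
      nlinarith [hsign g hg0, mul_pos (sub_pos.mpr hgG) hp]
  · apply strictMonoOn_of_deriv_pos (convex_Ici G)
    · exact fun g hg => (hcont g (ne_of_gt (lt_of_lt_of_le hG0 hg))).continuousWithinAt
    · intro g hg
      rw [interior_Ici] at hg
      have hg0 : 0 < g := lt_trans hG0 hg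
      rw [(hderiv g (ne_of_gt hg0)).deriv, hf']
      apply div_pos _ hb
      apply mul_pos (Real.exp_pos _)
      rw [sub_pos, div_lt_iff₀ (by positivity)]
      have hp : 0 < E * (g + G) - ρ * T := by nlinarith [mul_pos hE hg0]
      nlinarith [hsign g hg0, mul_pos (sub_pos.mpr hg) hp]
end

section
/- Let b, E, ρ, T > 0 and g_min > 0. Set g̃ = (1/2) · (ρT/E + √((ρT/E)² + 4ρT/E)) and define η : ℝ → ℝ by η(g) = ((1 - e^{-g})·E + e^{-g}·ρ·T/g)/b. Then for every g ≥ g_min, η(max(g_min, g̃)) ≤ η(g); that is, ĝ = max(g_min, g̃) minimizes η over [g_min, ∞). -/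
private lemma hasDerivF (E ρ T : ℝ) {x : ℝ} (hx : x ≠ 0) :
    HasDerivAt (fun g : ℝ => (1 - Real.exp (-g)) * E + Real.exp (-g) * ρ * T / g)
      (Real.exp (-x) / x ^ 2 * (E * x ^ 2 - ρ * T * x - ρ * T)) x := by
  have h1 : HasDerivAt (fun g : ℝ => Real.exp (-g)) (-Real.exp (-x)) x := by
    simpa [Function.comp_def] using (Real.hasDerivAt_exp (-x)).comp x ((hasDerivAt_id x).neg)
  have h2 := ((hasDerivAt_const x (1:ℝ)).sub h1).mul_const E
  have h3 := ((h1.mul_const ρ).mul_const T).div (hasDerivAt_id x) hx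
  have h : HasDerivAt (fun g : ℝ => (1 - Real.exp (-g)) * E + Real.exp (-g) * ρ * T / g) _ x := h2.add h3
  convert h using 1
  simp only [id]
  field_simp
  ring

theorem urllc_optimal_threshold (b E ρ T g_min : ℝ)
    (hb : 0 < b) (hE : 0 < E) (hρ : 0 < ρ) (hT : 0 < T) (hg : 0 < g_min) :
    ∀ g : ℝ, g_min ≤ g →
      (fun g : ℝ => ((1 - Real.exp (-g)) * E + Real.exp (-g) * ρ * T / g) / b)
          (max g_min ((1/2) * (ρ * T / E + Real.sqrt ((ρ * T / E) ^ 2 + 4 * ρ * T / E)))) ≤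
        (fun g : ℝ => ((1 - Real.exp (-g)) * E + Real.exp (-g) * ρ * T / g) / b) g := by
  intro g hgge
  dsimp only
  set F : ℝ → ℝ := fun g : ℝ => (1 - Real.exp (-g)) * E + Real.exp (-g) * ρ * T / g with hF
  set k : ℝ := ρ * T / E with hk
  have hkpos : 0 < k := div_pos (mul_pos hρ hT) hE
  set s : ℝ := Real.sqrt (k ^ 2 + 4 * ρ * T / E) with hsdef
  have hsnn : 0 ≤ s := Real.sqrt_nonneg _
  have hs2 : s ^ 2 = k ^ 2 + 4 * k := by
    rw [hsdef]
    rw [show k ^ 2 + 4 * ρ * T / E = k ^ 2 + 4 * k by rw [hk]; ring]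
    exact Real.sq_sqrt (by positivity)
  have hsk : k ≤ s := by nlinarith
  have hEk : E * k = ρ * T := by rw [hk]; field_simp
  set gt : ℝ := (1/2) * (k + s) with hgt
  have hgtpos : 0 < gt := by rw [hgt]; positivity
  -- factorization of the quadratic
  have factor : ∀ x : ℝ, E * x ^ 2 - ρ * T * x - ρ * T = E * ((x - gt) * (x - (k - s) / 2)) := by
    intro x
    rw [hgt]
    linear_combination (x + 1) * hEk + (E / 4) * hs2
  have sign_pos : ∀ x : ℝ, gt ≤ x → 0 ≤ E * x ^ 2 - ρ * T * x - ρ * T := by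
    intro x hx
    have h1 : 0 ≤ x - gt := sub_nonneg.2 hx
    have h2 : 0 ≤ x - (k - s) / 2 := by rw [hgt] at hx; linarith
    rw [factor x]
    exact mul_nonneg hE.le (mul_nonneg h1 h2)
  have sign_neg : ∀ x : ℝ, 0 < x → x ≤ gt → E * x ^ 2 - ρ * T * x - ρ * T ≤ 0 := by
    intro x hx0 hx
    have h1 : x - gt ≤ 0 := sub_nonpos.2 hx
    have h2 : 0 ≤ x - (k - s) / 2 := by nlinarith
    rw [factor x]
    exact mul_nonpos_of_nonneg_of_nonpos hE.le (mul_nonpos_of_nonpos_of_nonneg h1 h2)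
  -- monotonicity on [gt, ∞)
  have hmono : MonotoneOn F (Set.Ici gt) := by
    apply monotoneOn_of_deriv_nonneg (convex_Ici gt)
    · intro x hx
      exact (hasDerivF E ρ T (ne_of_gt (lt_of_lt_of_le hgtpos hx))).differentiableAt.continuousAt.continuousWithinAt
    · intro x hx
      rw [interior_Ici] at hx
      exact (hasDerivF E ρ T (ne_of_gt (lt_trans hgtpos hx))).differentiableAt.differentiableWithinAt
    · intro x hx
      rw [interior_Ici] at hx
      have hxpos : 0 < x := lt_trans hgtpos hx
      rw [(hasDerivF E ρ T (ne_of_gt hxpos)).deriv]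
      exact mul_nonneg (by positivity) (sign_pos x hx.le)
  -- antitonicity on [g_min, gt]
  have hanti : AntitoneOn F (Set.Icc g_min gt) := by
    apply antitoneOn_of_deriv_nonpos (convex_Icc g_min gt)
    · intro x hx
      exact (hasDerivF E ρ T (ne_of_gt (lt_of_lt_of_le hg hx.1))).differentiableAt.continuousAt.continuousWithinAt
    · intro x hx
      rw [interior_Icc] at hx
      exact (hasDerivF E ρ T (ne_of_gt (lt_trans hg hx.1))).differentiableAt.differentiableWithinAt
    · intro x hx
      rw [interior_Icc] at hx
      have hxpos : 0 < x := lt_trans hg hx.1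
      rw [(hasDerivF E ρ T (ne_of_gt hxpos)).deriv]
      exact mul_nonpos_of_nonneg_of_nonpos (by positivity) (sign_neg x hxpos hx.2.le)
  have main : F (max g_min gt) ≤ F g := by
    rcases le_total gt g_min with hc | hc
    · rw [max_eq_left hc]
      exact hmono (Set.mem_Ici.2 hc) (Set.mem_Ici.2 (le_trans hc hgge)) hgge
    · rw [max_eq_right hc]
      rcases le_total g gt with hcg | hcg
      · exact hanti (Set.mem_Icc.2 ⟨hgge, hcg⟩) (Set.mem_Icc.2 ⟨hc, le_refl gt⟩) hcg
      · exact hmono (Set.mem_Ici.2 (le_refl gt)) (Set.mem_Ici.2 hcg) hcg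
  exact div_le_div_of_nonneg_right main hb.le
end
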